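/- In a residuated lattice, for a filter F, the α-filter α(F) generated by F is proper (≠ A) if and only if F contains no dense element. -/
import Mathlib


/-- A (bounded, integral, commutative) residuated lattice. -/
class ResLattice (A : Type*) extends Lattice A, CommMonoid A, OrderBot A where
  himp : A → A → A
  adjunction : ∀ x y z : A, x * y ≤ z ↔ x ≤ himp y z
  le_one : ∀ x : A, x ≤ 1

variable {A : Type*} [ResLattice A]

/-- Coannihilator of a subset: `X^⊥ = {a | a ⊔ x = 1 for all x ∈ X}`. -/
def Coann (X : Set A) : Set A := {a | ∀ x ∈ X, a ⊔ x = 1}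

/-- Coannulet of an element: `x^⊥`. -/
def rperp (x : A) : Set A := Coann {x}

/-- The principal filter generated by `x`. -/
def PFil (x : A) : Set A := {a | ∃ n : ℕ, 0 < n ∧ x ^ n ≤ a}

/-- Filters of a residuated lattice. -/
def IsRLFilter (F : Set A) : Prop :=
  F.Nonempty ∧ (∀ x ∈ F, ∀ y ∈ F, x * y ∈ F) ∧ (∀ x ∈ F, ∀ y : A, x ⊔ y ∈ F)

/-- Prime filters. -/
def IsRLPrime (P : Set A) : Prop :=
  IsRLFilter P ∧ P ≠ Set.univ ∧ ∀ x y : A, x ⊔ y ∈ P → x ∈ P ∨ y ∈ P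

/-- Minimal prime filters. -/
def IsRLMinPrime (P : Set A) : Prop :=
  IsRLPrime P ∧ ∀ Q : Set A, IsRLPrime Q → Q ⊆ P → Q = P

/-- Quasicomplemented residuated lattice. -/
def Quasicomplemented (A : Type*) [ResLattice A] : Prop :=
  ∀ x : A, ∃ y : A, Coann (rperp x) = rperp y

/-- α-filters. -/
def IsAlphaFilter (F : Set A) : Prop :=
  IsRLFilter F ∧ ∀ x ∈ F, Coann (rperp x) ⊆ F

/-- The α-filter generated by a subset. -/
def alphaGen (X : Set A) : Set A := ⋂₀ {G : Set A | IsAlphaFilter G ∧ X ⊆ G}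

lemma rl_mul_le_mul {a b : A} (c : A) (h : a ≤ b) : a * c ≤ b * c := by
  have hb : b ≤ ResLattice.himp c (b * c) :=
    (ResLattice.adjunction b c (b * c)).mp le_rfl
  exact (ResLattice.adjunction a c (b * c)).mpr (h.trans hb)

lemma rl_mul_le_left (a b : A) : a * b ≤ a := by
  have : b * a ≤ 1 * a := rl_mul_le_mul a (ResLattice.le_one b)
  rwa [mul_comm b a, one_mul] at this

lemma mem_rperp {a x : A} : a ∈ rperp x ↔ a ⊔ x = 1 := by
  simp [rperp, Coann]

lemma one_mem_rperp (x : A) : (1 : A) ∈ rperp x :=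
  mem_rperp.mpr (sup_eq_left.mpr (ResLattice.le_one x))

lemma sup_mul_eq_one {a b c : A} (h1 : a ⊔ b = 1) (h2 : a ⊔ c = 1) :
    a ⊔ b * c = 1 := by
  refine le_antisymm (ResLattice.le_one _) ?_
  have key : (a ⊔ b) * (a ⊔ c) ≤ a ⊔ b * c := by
    refine (ResLattice.adjunction _ _ _).mpr (sup_le ?_ ?_)
    · exact (ResLattice.adjunction _ _ _).mp
        ((rl_mul_le_left a (a ⊔ c)).trans le_sup_left)
    · -- b * (a ⊔ c) ≤ a ⊔ b * c
      refine (ResLattice.adjunction _ _ _).mp ?_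
      rw [mul_comm b (a ⊔ c)]
      refine (ResLattice.adjunction _ _ _).mpr (sup_le ?_ ?_)
      · exact (ResLattice.adjunction _ _ _).mp
          ((rl_mul_le_left a b).trans le_sup_left)
      · refine (ResLattice.adjunction _ _ _).mp ?_
        rw [mul_comm c b]
        exact le_sup_right
  calc (1 : A) = (a ⊔ b) * (a ⊔ c) := by rw [h1, h2, one_mul]
    _ ≤ a ⊔ b * c := key

lemma self_mem_coann_rperp (x : A) : x ∈ Coann (rperp x) := by
  intro y hy
  rw [mem_rperp] at hy
  rw [sup_comm]; exact hy

theorem stmt18 (F : Set A) (hF : IsRLFilter F) :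
    alphaGen F ≠ Set.univ ↔ ¬ ∃ d ∈ F, rperp d = {1} := by
  obtain ⟨hne, hmul, hsup⟩ := hF
  constructor
  · intro h hd
    apply h
    obtain ⟨d, hdF, hdperp⟩ := hd
    apply Set.eq_univ_of_forall
    intro a G hG
    obtain ⟨⟨hGfil, hGalpha⟩, hFG⟩ := hG
    refine hGalpha d (hFG hdF) ?_
    intro y hy
    rw [hdperp, Set.mem_singleton_iff] at hy
    subst hy
    exact sup_eq_right.mpr (ResLattice.le_one a)
  · intro hnd
    set G : Set A := {a | ∃ x ∈ F, a ∈ Coann (rperp x)} with hGdef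
    have hFG : F ⊆ G := fun x hx => ⟨x, hx, self_mem_coann_rperp x⟩
    have hGalpha : IsAlphaFilter G := by
      refine ⟨⟨?_, ?_, ?_⟩, ?_⟩
      · obtain ⟨x, hx⟩ := hne
        exact ⟨x, hFG hx⟩
      · rintro a ⟨x, hxF, hax⟩ b ⟨y, hyF, hby⟩
        refine ⟨x * y, hmul x hxF y hyF, ?_⟩
        intro c hc
        rw [mem_rperp] at hc
        have hcx : c ∈ rperp x := by
          rw [mem_rperp]
          exact le_antisymm (ResLattice.le_one _)
            (hc ▸ sup_le_sup_left (rl_mul_le_left x y) c)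
        have hcy : c ∈ rperp y := by
          rw [mem_rperp]
          refine le_antisymm (ResLattice.le_one _) ?_
          have : x * y ≤ y := by rw [mul_comm]; exact rl_mul_le_left y x
          exact hc ▸ sup_le_sup_left this c
        have h1 : c ⊔ a = 1 := by rw [sup_comm]; exact hax c hcx
        have h2 : c ⊔ b = 1 := by rw [sup_comm]; exact hby c hcy
        rw [sup_comm]
        exact sup_mul_eq_one h1 h2
      · rintro a ⟨x, hxF, hax⟩ y
        refine ⟨x, hxF, ?_⟩
        intro c hc
        have h1 : a ⊔ c = 1 := hax c hc
        refine le_antisymm (ResLattice.le_one _) ?_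
        calc (1 : A) = a ⊔ c := h1.symm
          _ ≤ (a ⊔ y) ⊔ c := sup_le_sup_right le_sup_left c
      · rintro a ⟨x, hxF, hax⟩ b hb
        refine ⟨x, hxF, ?_⟩
        intro c hc
        refine hb c ?_
        rw [mem_rperp]
        rw [sup_comm]
        exact hax c hc
    have hsub : alphaGen F ⊆ G := Set.sInter_subset_of_mem ⟨hGalpha, hFG⟩
    intro heq
    have hbot : (⊥ : A) ∈ G := hsub (heq ▸ Set.mem_univ ⊥)
    obtain ⟨x, hxF, hbx⟩ := hbot
    apply hnd
    refine ⟨x, hxF, ?_⟩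
    apply Set.eq_of_subset_of_subset
    · intro c hc
      have := hbx c hc
      rw [bot_sup_eq] at this
      exact this
    · intro c hc
      rw [Set.mem_singleton_iff] at hc
      subst hc
      exact one_mem_rperp x
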